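/- arXiv:2310.09646 — 2 statements merged into one kernel-verified Lean document; each statement's English description precedes it below -/
import Mathlib

section
/- The energy distance between two probability distributions on ℝ^d is nonnegative: 2E‖X−Y‖ − E‖X−X'‖ − E‖Y−Y'‖ ≥ 0, where X, X' are i.i.d. from F, Y, Y' are i.i.d. from G, and all four random vectors are independent, assuming E‖X‖ < ∞ and E‖Y‖ < ∞. -/
open MeasureTheory ProbabilityTheory ENNReal

open scoped RealInnerProductSpace

/-- Pointwise key inequality in `ℝ≥0∞`. -/
lemma ed_key {x x' y y' : ℝ≥0∞} (hx : x + x' = 1) (hy : y + y' = 1) :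
    x * x' + x * x' + (y * y' + y * y') ≤ 2 * (x * y' + y * x') := by
  have hxt : x ≠ ∞ := fun h => by simp [h] at hx
  have hxt' : x' ≠ ∞ := fun h => by simp [h] at hx
  have hyt : y ≠ ∞ := fun h => by simp [h] at hy
  have hyt' : y' ≠ ∞ := fun h => by simp [h] at hy
  lift x to NNReal using hxt
  lift x' to NNReal using hxt'
  lift y to NNReal using hyt
  lift y' to NNReal using hyt'
  rw [← ENNReal.coe_one, ← ENNReal.coe_add, ENNReal.coe_inj] at hx hy
  have hx' : (x : ℝ) + x' = 1 := by exact_mod_cast congrArg NNReal.toReal hx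
  have hy' : (y : ℝ) + y' = 1 := by exact_mod_cast congrArg NNReal.toReal hy
  have ex : (x' : ℝ) = 1 - x := by linarith
  have ey : (y' : ℝ) = 1 - y := by linarith
  have : ((x : ℝ) * x' + x * x' + (y * y' + y * y')) ≤ 2 * (x * y' + y * x') := by
    rw [ex, ey]; nlinarith [sq_nonneg ((x:ℝ) - y)]
  have h2 : ((2 : ℝ≥0∞)) = ((2 : NNReal) : ℝ≥0∞) := by norm_num
  rw [h2]
  push_cast [← ENNReal.coe_mul, ← ENNReal.coe_add, ENNReal.coe_le_coe]
  have h3 := ENNReal.coe_le_coe.2 (show x * x' + x * x' + (y * y' + y * y') ≤ 2 * (x * y' + y * x') by exact_mod_cast this)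
  exact h3.trans_eq (by rw [ENNReal.coe_mul]; norm_num)

/-- `|a - b|` as an integral of indicator products. -/
lemma ed_abs (a b : ℝ) :
    ENNReal.ofReal |a - b|
      = ∫⁻ t, ((if a ≤ t then 1 else 0) * (if t < b then 1 else 0)
          + (if b ≤ t then 1 else 0) * (if t < a then 1 else 0)) := by
  have h1 : ∀ c d t : ℝ, (if c ≤ t then (1:ℝ≥0∞) else 0) * (if t < d then 1 else 0)
      = (Set.Ico c d).indicator 1 t := by
    intro c d t
    by_cases h1 : c ≤ t <;> by_cases h2 : t < d <;>
      simp [Set.indicator_apply, Set.mem_Ico, h1, h2]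
  simp_rw [h1]
  rw [lintegral_add_left (measurable_one.indicator measurableSet_Ico)]
  rw [lintegral_indicator_one measurableSet_Ico, lintegral_indicator_one measurableSet_Ico,
    Real.volume_Ico, Real.volume_Ico]
  rcases le_total a b with h | h
  · rw [abs_sub_comm, abs_of_nonneg (sub_nonneg.2 h)]
    rw [ENNReal.ofReal_eq_zero.2 (by linarith : a - b ≤ 0), add_zero]
  · rw [abs_of_nonneg (sub_nonneg.2 h)]
    rw [ENNReal.ofReal_eq_zero.2 (by linarith : b - a ≤ 0), zero_add]

lemma ed_mle {δ : Type*} [MeasurableSpace δ] {u v : δ → ℝ} (hu : Measurable u)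
    (hv : Measurable v) : Measurable fun x => (if u x ≤ v x then (1:ℝ≥0∞) else 0) :=
  Measurable.ite (measurableSet_le hu hv) measurable_const measurable_const

lemma ed_mlt {δ : Type*} [MeasurableSpace δ] {u v : δ → ℝ} (hu : Measurable u)
    (hv : Measurable v) : Measurable fun x => (if u x < v x then (1:ℝ≥0∞) else 0) :=
  Measurable.ite (measurableSet_lt hu hv) measurable_const measurable_const

lemma ed_lint_le (τ : Measure ℝ) (t : ℝ) :
    ∫⁻ b, (if b ≤ t then (1:ℝ≥0∞) else 0) ∂τ = τ (Set.Iic t) := by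
  have : (fun b : ℝ => (if b ≤ t then (1:ℝ≥0∞) else 0)) = (Set.Iic t).indicator 1 := by
    funext b; simp [Set.indicator_apply, Set.mem_Iic]
  rw [this, lintegral_indicator_one measurableSet_Iic]

lemma ed_lint_lt (τ : Measure ℝ) (t : ℝ) :
    ∫⁻ b, (if t < b then (1:ℝ≥0∞) else 0) ∂τ = τ (Set.Ioi t) := by
  have : (fun b : ℝ => (if t < b then (1:ℝ≥0∞) else 0)) = (Set.Ioi t).indicator 1 := by
    funext b; simp [Set.indicator_apply, Set.mem_Ioi]
  rw [this, lintegral_indicator_one measurableSet_Ioi]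

/-- CDF representation of the expected distance, for measures on `ℝ`. -/
lemma ed_rep (σ τ : Measure ℝ) [IsProbabilityMeasure σ] [IsProbabilityMeasure τ] :
    ∫⁻ a, ∫⁻ b, ENNReal.ofReal |a - b| ∂τ ∂σ
      = ∫⁻ t, σ (Set.Iic t) * τ (Set.Ioi t) + τ (Set.Iic t) * σ (Set.Ioi t) := by
  simp_rw [ed_abs]
  have s1 : ∀ a : ℝ, (∫⁻ b, ∫⁻ t, ((if a ≤ t then (1:ℝ≥0∞) else 0) * (if t < b then 1 else 0)
        + (if b ≤ t then 1 else 0) * (if t < a then 1 else 0)) ∂volume ∂τ)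
      = ∫⁻ t, ∫⁻ b, ((if a ≤ t then (1:ℝ≥0∞) else 0) * (if t < b then 1 else 0)
        + (if b ≤ t then 1 else 0) * (if t < a then 1 else 0)) ∂τ ∂volume := by
    intro a
    refine lintegral_lintegral_swap ?_
    exact (((ed_mle measurable_const measurable_snd).mul
        (ed_mlt measurable_snd measurable_fst)).add
      ((ed_mle measurable_fst measurable_snd).mul
        (ed_mlt measurable_snd measurable_const))).aemeasurable
  rw [lintegral_congr s1]
  rw [lintegral_lintegral_swap]
  · refine lintegral_congr fun t => ?_
    have hb : ∀ a : ℝ, (∫⁻ b, ((if a ≤ t then (1:ℝ≥0∞) else 0) * (if t < b then 1 else 0)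
          + (if b ≤ t then 1 else 0) * (if t < a then 1 else 0)) ∂τ)
        = (if a ≤ t then (1:ℝ≥0∞) else 0) * τ (Set.Ioi t)
          + τ (Set.Iic t) * (if t < a then 1 else 0) := by
      intro a
      rw [lintegral_add_left ((ed_mlt measurable_const measurable_id').const_mul _)]
      rw [lintegral_const_mul _ (ed_mlt measurable_const measurable_id'),
        lintegral_mul_const _ (ed_mle measurable_id' measurable_const),
        ed_lint_lt, ed_lint_le]
    simp_rw [hb]
    rw [lintegral_add_left ((ed_mle measurable_id' measurable_const).mul_const _)]
    rw [lintegral_mul_const _ (ed_mle measurable_id' measurable_const),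
      lintegral_const_mul _ (ed_mlt measurable_const measurable_id'),
      ed_lint_le, ed_lint_lt]
  · refine (Measurable.lintegral_prod_right ?_).aemeasurable
    exact (((ed_mle measurable_fst.fst measurable_fst.snd).mul
        (ed_mlt measurable_fst.snd measurable_snd)).add
      ((ed_mle measurable_snd measurable_fst.snd).mul
        (ed_mlt measurable_fst.snd measurable_fst.fst)))

lemma ed_oneDim (α β : Measure ℝ) [IsProbabilityMeasure α] [IsProbabilityMeasure β] :
    (∫⁻ a, ∫⁻ b, ENNReal.ofReal |a - b| ∂α ∂α) + (∫⁻ a, ∫⁻ b, ENNReal.ofReal |a - b| ∂β ∂β)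
      ≤ 2 * ∫⁻ a, ∫⁻ b, ENNReal.ofReal |a - b| ∂β ∂α := by
  have hm : ∀ κ : Measure ℝ, Measurable fun t => κ (Set.Iic t) := fun κ =>
    Monotone.measurable (fun s t h => measure_mono (Set.Iic_subset_Iic.2 h))
  have hm' : ∀ κ : Measure ℝ, Measurable fun t => κ (Set.Ioi t) := fun κ =>
    Antitone.measurable (fun s t h => measure_mono (Set.Ioi_subset_Ioi h))
  have hone : ∀ (κ : Measure ℝ) [IsProbabilityMeasure κ], ∀ t,
      κ (Set.Iic t) + κ (Set.Ioi t) = 1 := by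
    intro κ _ t
    have := measure_add_measure_compl (μ := κ) (measurableSet_Iic (a := t))
    rwa [Set.compl_Iic, measure_univ] at this
  rw [ed_rep α α, ed_rep β β, ed_rep α β]
  rw [← lintegral_add_left (((hm α).fun_mul (hm' α)).fun_add ((hm α).fun_mul (hm' α))),
    ← lintegral_const_mul 2 (((hm α).fun_mul (hm' β)).fun_add ((hm β).fun_mul (hm' α)))]
  exact lintegral_mono fun t => ed_key (hone α t) (hone β t)

open scoped RealInnerProductSpace

lemma ed_f_cont {d : ℕ} (e₀ : EuclideanSpace ℝ (Fin d)) :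
    Measurable fun u : EuclideanSpace ℝ (Fin d) =>
      ENNReal.ofReal (Real.exp (-‖u‖^2)) * ENNReal.ofReal |⟪u, e₀⟫| := by
  refine Measurable.fun_mul ?_ ?_
  · exact ENNReal.measurable_ofReal.comp
      (Real.continuous_exp.comp (continuous_norm.pow 2).neg).measurable
  · exact ENNReal.measurable_ofReal.comp
      ((continuous_id.inner continuous_const).abs).measurable

lemma ed_slice {d : ℕ} {e₀ : EuclideanSpace ℝ (Fin d)} (he : ‖e₀‖ = 1)
    (v : EuclideanSpace ℝ (Fin d)) :
    ∫⁻ u, ENNReal.ofReal (Real.exp (-‖u‖^2)) * ENNReal.ofReal |⟪u, v⟫| ∂volume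
      = (∫⁻ u, ENNReal.ofReal (Real.exp (-‖u‖^2)) * ENNReal.ofReal |⟪u, e₀⟫| ∂volume)
        * ENNReal.ofReal ‖v‖ := by
  by_cases hv : v = 0
  · simp [hv]
  · set w : EuclideanSpace ℝ (Fin d) := ‖v‖⁻¹ • v with hwdef
    have hnv : ‖v‖ ≠ 0 := norm_ne_zero_iff.2 hv
    have hw : ‖w‖ = 1 := by
      rw [hwdef, norm_smul, norm_inv, norm_norm, inv_mul_cancel₀ hnv]
    have hv' : v = ‖v‖ • w := by
      rw [hwdef, smul_smul, mul_inv_cancel₀ hnv, one_smul]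
    have step1 : ∀ u : EuclideanSpace ℝ (Fin d),
        ENNReal.ofReal (Real.exp (-‖u‖^2)) * ENNReal.ofReal |⟪u, v⟫|
          = (ENNReal.ofReal (Real.exp (-‖u‖^2)) * ENNReal.ofReal |⟪u, w⟫|)
            * ENNReal.ofReal ‖v‖ := by
      intro u
      have hin : ⟪u, v⟫ = ‖v‖ * ⟪u, w⟫ := by
        conv_lhs => rw [hv']
        rw [real_inner_smul_right]
      rw [hin, abs_mul, abs_of_nonneg (norm_nonneg v),
        ENNReal.ofReal_mul (norm_nonneg v)]
      ring
    rw [lintegral_congr step1, lintegral_mul_const' _ _ ENNReal.ofReal_ne_top]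
    congr 1
    -- rotate w to e₀
    set e := Submodule.reflection (ℝ ∙ (e₀ - w))ᗮ with hedef
    have hee : e e₀ = w := Submodule.reflection_sub (by rw [he, hw])
    have step2 : ∀ u : EuclideanSpace ℝ (Fin d),
        ENNReal.ofReal (Real.exp (-‖u‖^2)) * ENNReal.ofReal |⟪u, w⟫|
          = (fun x => ENNReal.ofReal (Real.exp (-‖x‖^2)) * ENNReal.ofReal |⟪x, e₀⟫|)
              (e.symm u) := by
      intro u
      simp only
      rw [e.symm.norm_map]
      congr 2
      rw [← hee, ← LinearIsometryEquiv.inner_map_map e (e.symm u) e₀,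
        e.apply_symm_apply]
    rw [lintegral_congr step2]
    exact e.symm.measurePreserving.lintegral_comp (ed_f_cont e₀)

lemma ed_c_ne_top {d : ℕ} {e₀ : EuclideanSpace ℝ (Fin d)} (he : ‖e₀‖ = 1) :
    (∫⁻ u, ENNReal.ofReal (Real.exp (-‖u‖^2)) * ENNReal.ofReal |⟪u, e₀⟫| ∂volume) ≠ ∞ := by
  have hint : Integrable (fun u : EuclideanSpace ℝ (Fin d) =>
      Real.exp (-(1/2) * ‖u‖^2)) volume := by
    have h := GaussianFourier.integrable_cexp_neg_mul_sq_norm_add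
      (V := EuclideanSpace ℝ (Fin d)) (b := (1/2 : ℂ)) (by norm_num) 0 0
    have := h.norm
    refine this.congr (Filter.Eventually.of_forall fun u => ?_)
    simp [Complex.norm_exp, ← Complex.ofReal_pow]
  have hb : ∀ u : EuclideanSpace ℝ (Fin d),
      ENNReal.ofReal (Real.exp (-‖u‖^2)) * ENNReal.ofReal |⟪u, e₀⟫|
        ≤ ENNReal.ofReal (Real.exp (-(1/2) * ‖u‖^2)) := by
    intro u
    rw [← ENNReal.ofReal_mul (Real.exp_pos _).le]
    refine ENNReal.ofReal_le_ofReal ?_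
    set t := ‖u‖ with ht
    have ht0 : 0 ≤ t := norm_nonneg u
    have h1 : |⟪u, e₀⟫| ≤ t := by
      have := abs_real_inner_le_norm u e₀
      rwa [he, mul_one] at this
    have h2 : Real.exp (-t^2) * |⟪u, e₀⟫| ≤ Real.exp (-t^2) * t :=
      mul_le_mul_of_nonneg_left h1 (Real.exp_pos _).le
    refine h2.trans ?_
    have h3 : t ≤ Real.exp ((1/2) * t^2) := by
      have h4 : t ≤ (1/2) * t^2 + 1 := by nlinarith [sq_nonneg (t - 1)]
      have h5 := Real.add_one_le_exp ((1/2) * t^2)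
      linarith
    calc Real.exp (-t^2) * t ≤ Real.exp (-t^2) * Real.exp ((1/2) * t^2) :=
          mul_le_mul_of_nonneg_left h3 (Real.exp_pos _).le
      _ = Real.exp (-(1/2) * t^2) := by rw [← Real.exp_add]; ring_nf
  refine (lt_of_le_of_lt (lintegral_mono hb) ?_).ne
  have := hint.hasFiniteIntegral
  rw [HasFiniteIntegral] at this
  refine lt_of_eq_of_lt ?_ this
  refine lintegral_congr fun u => ?_
  rw [← ofReal_norm, Real.norm_of_nonneg (Real.exp_pos _).le]

lemma ed_c_ne_zero {d : ℕ} {e₀ : EuclideanSpace ℝ (Fin d)} (he : ‖e₀‖ = 1) :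
    (∫⁻ u, ENNReal.ofReal (Real.exp (-‖u‖^2)) * ENNReal.ofReal |⟪u, e₀⟫| ∂volume) ≠ 0 := by
  intro h0
  rw [lintegral_eq_zero_iff (ed_f_cont e₀)] at h0
  have hnull : volume {u : EuclideanSpace ℝ (Fin d) |
      ¬ (ENNReal.ofReal (Real.exp (-‖u‖^2)) * ENNReal.ofReal |⟪u, e₀⟫| = 0)} = 0 := by
    exact h0
  have hsub : {u : EuclideanSpace ℝ (Fin d) |
      ENNReal.ofReal (Real.exp (-‖u‖^2)) * ENNReal.ofReal |⟪u, e₀⟫| = 0}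
        ⊆ ((ℝ ∙ e₀)ᗮ : Submodule ℝ (EuclideanSpace ℝ (Fin d))) := by
    intro u hu
    simp only [Set.mem_setOf_eq, mul_eq_zero] at hu
    have hW : ENNReal.ofReal (Real.exp (-‖u‖^2)) ≠ 0 :=
      (ENNReal.ofReal_pos.2 (Real.exp_pos _)).ne'
    have h2 : ENNReal.ofReal |⟪u, e₀⟫| = 0 := hu.resolve_left hW
    rw [ENNReal.ofReal_eq_zero] at h2
    have h3 : ⟪u, e₀⟫ = 0 := abs_eq_zero.1 (le_antisymm h2 (abs_nonneg _))
    exact Submodule.mem_orthogonal_singleton_iff_inner_left.2 h3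
  have horth : volume (((ℝ ∙ e₀)ᗮ : Submodule ℝ (EuclideanSpace ℝ (Fin d))) : Set (EuclideanSpace ℝ (Fin d))) = 0 := by
    refine Measure.addHaar_submodule volume _ ?_
    intro h
    have : e₀ ∈ (ℝ ∙ e₀)ᗮ := h ▸ Submodule.mem_top
    have h4 : ⟪e₀, e₀⟫ = 0 := Submodule.mem_orthogonal_singleton_iff_inner_left.1 this
    rw [real_inner_self_eq_norm_sq, he] at h4
    norm_num at h4
  have : volume (Set.univ : Set (EuclideanSpace ℝ (Fin d))) = 0 := by
    have hcover : (Set.univ : Set (EuclideanSpace ℝ (Fin d)))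
        ⊆ {u | ENNReal.ofReal (Real.exp (-‖u‖^2)) * ENNReal.ofReal |⟪u, e₀⟫| = 0}
          ∪ {u | ¬ (ENNReal.ofReal (Real.exp (-‖u‖^2)) * ENNReal.ofReal |⟪u, e₀⟫| = 0)} := by
      intro u _; by_cases h : ENNReal.ofReal (Real.exp (-‖u‖^2)) * ENNReal.ofReal |⟪u, e₀⟫| = 0
      · exact Or.inl h
      · exact Or.inr h
    refine measure_mono_null hcover ?_
    refine measure_union_null (measure_mono_null hsub horth) hnull
  exact (IsOpen.measure_ne_zero volume isOpen_univ Set.univ_nonempty) this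

lemma ed_inner_meas {d : ℕ} (u : EuclideanSpace ℝ (Fin d)) :
    Measurable fun x : EuclideanSpace ℝ (Fin d) => ⟪u, x⟫ :=
  (continuous_const.inner continuous_id).measurable

lemma ed_claim2 {d : ℕ} (u : EuclideanSpace ℝ (Fin d))
    (σ τ : Measure (EuclideanSpace ℝ (Fin d)))
    [IsProbabilityMeasure σ] [IsProbabilityMeasure τ] :
    (∫⁻ p : EuclideanSpace ℝ (Fin d) × EuclideanSpace ℝ (Fin d),
        ENNReal.ofReal |⟪u, p.1 - p.2⟫| ∂(σ.prod τ))
      = ∫⁻ a, ∫⁻ b, ENNReal.ofReal |a - b|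
          ∂(τ.map fun x => ⟪u, x⟫) ∂(σ.map fun x => ⟪u, x⟫) := by
  have habs : Measurable fun q : ℝ × ℝ => ENNReal.ofReal |q.1 - q.2| :=
    ENNReal.measurable_ofReal.comp ((measurable_fst.sub measurable_snd).abs)
  have hf : Measurable fun a : ℝ => ∫⁻ b, ENNReal.ofReal |a - b|
      ∂(τ.map fun x => ⟪u, x⟫) := Measurable.lintegral_prod_right habs
  rw [lintegral_map hf (ed_inner_meas u)]
  have h1 : ∀ a : ℝ, ∫⁻ b, ENNReal.ofReal |a - b| ∂(τ.map fun x => ⟪u, x⟫)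
      = ∫⁻ y, ENNReal.ofReal |a - ⟪u, y⟫| ∂τ := fun a =>
    lintegral_map (ENNReal.measurable_ofReal.comp
      ((measurable_const.sub measurable_id).abs)) (ed_inner_meas u)
  simp_rw [h1]
  rw [lintegral_prod]
  · refine lintegral_congr fun x => lintegral_congr fun y => ?_
    rw [inner_sub_right]
  · refine (ENNReal.measurable_ofReal.comp ?_).aemeasurable
    exact (measurable_const.inner (measurable_fst.sub measurable_snd)).abs

set_option maxHeartbeats 1000000 in
lemma ed_claim1 {d : ℕ} {e₀ : EuclideanSpace ℝ (Fin d)} (he : ‖e₀‖ = 1)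
    (σ τ : Measure (EuclideanSpace ℝ (Fin d)))
    [IsProbabilityMeasure σ] [IsProbabilityMeasure τ] :
    (∫⁻ u : EuclideanSpace ℝ (Fin d), ENNReal.ofReal (Real.exp (-‖u‖^2))
        * ∫⁻ p : EuclideanSpace ℝ (Fin d) × EuclideanSpace ℝ (Fin d),
          ENNReal.ofReal |⟪u, p.1 - p.2⟫| ∂(σ.prod τ) ∂volume)
      = (∫⁻ u : EuclideanSpace ℝ (Fin d),
          ENNReal.ofReal (Real.exp (-‖u‖^2)) * ENNReal.ofReal |⟪u, e₀⟫| ∂volume)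
        * ∫⁻ p : EuclideanSpace ℝ (Fin d) × EuclideanSpace ℝ (Fin d),
          ENNReal.ofReal ‖p.1 - p.2‖ ∂(σ.prod τ) := by
  have h1 : ∀ u : EuclideanSpace ℝ (Fin d),
      ENNReal.ofReal (Real.exp (-‖u‖^2))
        * (∫⁻ p : EuclideanSpace ℝ (Fin d) × EuclideanSpace ℝ (Fin d),
          ENNReal.ofReal |⟪u, p.1 - p.2⟫| ∂(σ.prod τ))
      = ∫⁻ p : EuclideanSpace ℝ (Fin d) × EuclideanSpace ℝ (Fin d),
          ENNReal.ofReal (Real.exp (-‖u‖^2))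
            * ENNReal.ofReal |⟪u, p.1 - p.2⟫| ∂(σ.prod τ) :=
    fun u => (lintegral_const_mul' _ _ ENNReal.ofReal_ne_top).symm
  have hmeas : AEMeasurable (Function.uncurry fun (u : EuclideanSpace ℝ (Fin d))
      (p : EuclideanSpace ℝ (Fin d) × EuclideanSpace ℝ (Fin d)) =>
      ENNReal.ofReal (Real.exp (-‖u‖^2)) * ENNReal.ofReal |⟪u, p.1 - p.2⟫|)
      ((volume : Measure (EuclideanSpace ℝ (Fin d))).prod (σ.prod τ)) := by
    refine Measurable.aemeasurable (Measurable.fun_mul ?_ ?_)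
    · exact (ENNReal.measurable_ofReal.comp
        (Real.continuous_exp.comp (continuous_norm.pow 2).neg).measurable).comp measurable_fst
    · refine ENNReal.measurable_ofReal.comp ?_
      exact ((measurable_fst.inner (measurable_snd.fst.sub measurable_snd.snd)).abs)
  have hswap := lintegral_lintegral_swap hmeas
  rw [lintegral_congr h1, hswap]
  have hmid := lintegral_congr (μ := σ.prod τ)
    fun p : EuclideanSpace ℝ (Fin d) × EuclideanSpace ℝ (Fin d) => ed_slice he (p.1 - p.2)
  rw [hmid]
  exact lintegral_const_mul' _ _ (ed_c_ne_top he)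

set_option maxHeartbeats 1000000 in
lemma ed_core {d : ℕ} (ν ρ : Measure (EuclideanSpace ℝ (Fin d)))
    [IsProbabilityMeasure ν] [IsProbabilityMeasure ρ] :
    (∫⁻ p : EuclideanSpace ℝ (Fin d) × EuclideanSpace ℝ (Fin d),
        ENNReal.ofReal ‖p.1 - p.2‖ ∂(ν.prod ν))
      + (∫⁻ p : EuclideanSpace ℝ (Fin d) × EuclideanSpace ℝ (Fin d),
        ENNReal.ofReal ‖p.1 - p.2‖ ∂(ρ.prod ρ))
      ≤ 2 * ∫⁻ p : EuclideanSpace ℝ (Fin d) × EuclideanSpace ℝ (Fin d),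
        ENNReal.ofReal ‖p.1 - p.2‖ ∂(ν.prod ρ) := by
  rcases Nat.eq_zero_or_pos d with hd | hd
  · subst hd
    have hz : ∀ p : EuclideanSpace ℝ (Fin 0) × EuclideanSpace ℝ (Fin 0),
        ENNReal.ofReal ‖p.1 - p.2‖ = 0 := by
      intro p
      have : p.1 - p.2 = 0 := by ext i; exact Fin.elim0 i
      simp [this]
    simp only [hz, lintegral_zero, mul_zero, add_zero, le_refl]
  · have he : ‖(EuclideanSpace.single (⟨0, hd⟩ : Fin d) (1:ℝ))‖ = 1 := by
      rw [EuclideanSpace.norm_single, norm_one]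
    set e₀ : EuclideanSpace ℝ (Fin d) := EuclideanSpace.single (⟨0, hd⟩ : Fin d) (1:ℝ)
    have hWm : Measurable fun u : EuclideanSpace ℝ (Fin d) =>
        ENNReal.ofReal (Real.exp (-‖u‖^2)) :=
      ENNReal.measurable_ofReal.comp
        (Real.continuous_exp.comp (continuous_norm.pow 2).neg).measurable
    have hJm : ∀ (σ τ : Measure (EuclideanSpace ℝ (Fin d)))
        [IsProbabilityMeasure σ] [IsProbabilityMeasure τ],
        Measurable fun u : EuclideanSpace ℝ (Fin d) =>
          ∫⁻ p : EuclideanSpace ℝ (Fin d) × EuclideanSpace ℝ (Fin d),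
            ENNReal.ofReal |⟪u, p.1 - p.2⟫| ∂(σ.prod τ) := by
      intro σ τ _ _
      exact Measurable.lintegral_prod_right (ENNReal.measurable_ofReal.comp
        ((measurable_fst.inner (measurable_snd.fst.sub measurable_snd.snd)).abs))
    have hpt : ∀ u : EuclideanSpace ℝ (Fin d),
        (∫⁻ p : EuclideanSpace ℝ (Fin d) × EuclideanSpace ℝ (Fin d),
            ENNReal.ofReal |⟪u, p.1 - p.2⟫| ∂(ν.prod ν))
          + (∫⁻ p : EuclideanSpace ℝ (Fin d) × EuclideanSpace ℝ (Fin d),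
            ENNReal.ofReal |⟪u, p.1 - p.2⟫| ∂(ρ.prod ρ))
          ≤ 2 * ∫⁻ p : EuclideanSpace ℝ (Fin d) × EuclideanSpace ℝ (Fin d),
            ENNReal.ofReal |⟪u, p.1 - p.2⟫| ∂(ν.prod ρ) := by
      intro u
      haveI h1 : IsProbabilityMeasure (ν.map fun x => ⟪u, x⟫) :=
        Measure.isProbabilityMeasure_map (ed_inner_meas u).aemeasurable
      haveI h2 : IsProbabilityMeasure (ρ.map fun x => ⟪u, x⟫) :=
        Measure.isProbabilityMeasure_map (ed_inner_meas u).aemeasurable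
      rw [ed_claim2 u ν ν, ed_claim2 u ρ ρ, ed_claim2 u ν ρ]
      exact ed_oneDim _ _
    have hkey : (∫⁻ u : EuclideanSpace ℝ (Fin d),
          ENNReal.ofReal (Real.exp (-‖u‖^2)) * ENNReal.ofReal |⟪u, e₀⟫| ∂volume)
        * ((∫⁻ p : EuclideanSpace ℝ (Fin d) × EuclideanSpace ℝ (Fin d),
            ENNReal.ofReal ‖p.1 - p.2‖ ∂(ν.prod ν))
          + (∫⁻ p : EuclideanSpace ℝ (Fin d) × EuclideanSpace ℝ (Fin d),
            ENNReal.ofReal ‖p.1 - p.2‖ ∂(ρ.prod ρ)))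
        ≤ (∫⁻ u : EuclideanSpace ℝ (Fin d),
          ENNReal.ofReal (Real.exp (-‖u‖^2)) * ENNReal.ofReal |⟪u, e₀⟫| ∂volume)
        * (2 * ∫⁻ p : EuclideanSpace ℝ (Fin d) × EuclideanSpace ℝ (Fin d),
            ENNReal.ofReal ‖p.1 - p.2‖ ∂(ν.prod ρ)) := by
      rw [mul_add, ← ed_claim1 he ν ν, ← ed_claim1 he ρ ρ]
      rw [← lintegral_add_left (hWm.fun_mul (hJm ν ν))]
      have step1 : (∫⁻ u : EuclideanSpace ℝ (Fin d),
          (ENNReal.ofReal (Real.exp (-‖u‖^2))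
            * ∫⁻ p : EuclideanSpace ℝ (Fin d) × EuclideanSpace ℝ (Fin d),
              ENNReal.ofReal |⟪u, p.1 - p.2⟫| ∂(ν.prod ν))
          + ENNReal.ofReal (Real.exp (-‖u‖^2))
            * ∫⁻ p : EuclideanSpace ℝ (Fin d) × EuclideanSpace ℝ (Fin d),
              ENNReal.ofReal |⟪u, p.1 - p.2⟫| ∂(ρ.prod ρ) ∂volume)
          ≤ ∫⁻ u : EuclideanSpace ℝ (Fin d),
            2 * (ENNReal.ofReal (Real.exp (-‖u‖^2))
              * ∫⁻ p : EuclideanSpace ℝ (Fin d) × EuclideanSpace ℝ (Fin d),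
                ENNReal.ofReal |⟪u, p.1 - p.2⟫| ∂(ν.prod ρ)) ∂volume := by
        refine lintegral_mono fun u => ?_
        rw [← mul_add, mul_left_comm]
        exact mul_le_mul_right (hpt u) _
      refine step1.trans ?_
      rw [lintegral_const_mul' 2 _ (by norm_num : (2:ℝ≥0∞) ≠ ∞)]
      rw [ed_claim1 he ν ρ]
      rw [← mul_assoc, mul_comm (2:ℝ≥0∞) _, mul_assoc]
    exact (ENNReal.mul_le_mul_iff_right (ed_c_ne_zero he) (ed_c_ne_top he)).1 hkey

lemma ed_lint_fin {d : ℕ} (σ τ : Measure (EuclideanSpace ℝ (Fin d)))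
    [IsProbabilityMeasure σ] [IsProbabilityMeasure τ]
    (hσ : Integrable (fun x => ‖x‖) σ) (hτ : Integrable (fun x => ‖x‖) τ) :
    (∫⁻ p : EuclideanSpace ℝ (Fin d) × EuclideanSpace ℝ (Fin d),
      ENNReal.ofReal ‖p.1 - p.2‖ ∂(σ.prod τ)) ≠ ∞ := by
  have hmono : (∫⁻ p : EuclideanSpace ℝ (Fin d) × EuclideanSpace ℝ (Fin d),
      ENNReal.ofReal ‖p.1 - p.2‖ ∂(σ.prod τ))
      ≤ ∫⁻ p : EuclideanSpace ℝ (Fin d) × EuclideanSpace ℝ (Fin d),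
        ENNReal.ofReal ‖p.1‖ + ENNReal.ofReal ‖p.2‖ ∂(σ.prod τ) := by
    refine lintegral_mono fun p => ?_
    rw [← ENNReal.ofReal_add (norm_nonneg _) (norm_nonneg _)]
    exact ENNReal.ofReal_le_ofReal (norm_sub_le _ _)
  refine (lt_of_le_of_lt hmono ?_).ne
  rw [lintegral_add_left measurable_fst.norm.ennreal_ofReal]
  have hfst : (∫⁻ p : EuclideanSpace ℝ (Fin d) × EuclideanSpace ℝ (Fin d),
      ENNReal.ofReal ‖p.1‖ ∂(σ.prod τ)) = ∫⁻ x, ENNReal.ofReal ‖x‖ ∂σ := by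
    rw [← lintegral_map measurable_norm.ennreal_ofReal
      measurable_fst, Measure.map_fst_prod, measure_univ, one_smul]
  have hsnd : (∫⁻ p : EuclideanSpace ℝ (Fin d) × EuclideanSpace ℝ (Fin d),
      ENNReal.ofReal ‖p.2‖ ∂(σ.prod τ)) = ∫⁻ x, ENNReal.ofReal ‖x‖ ∂τ := by
    rw [← lintegral_map measurable_norm.ennreal_ofReal
      measurable_snd, Measure.map_snd_prod, measure_univ, one_smul]
  rw [hfst, hsnd]
  have hconv : ∀ (κ : Measure (EuclideanSpace ℝ (Fin d))),
      Integrable (fun x => ‖x‖) κ → (∫⁻ x, ENNReal.ofReal ‖x‖ ∂κ) < ∞ := by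
    intro κ hκ
    have := hκ.hasFiniteIntegral
    rw [HasFiniteIntegral] at this
    refine lt_of_eq_of_lt ?_ this
    refine lintegral_congr fun x => ?_
    rw [← ofReal_norm, norm_norm]
  exact ENNReal.add_lt_top.2 ⟨hconv σ hσ, hconv τ hτ⟩

lemma ed_int_eq {d : ℕ} (π : Measure (EuclideanSpace ℝ (Fin d) × EuclideanSpace ℝ (Fin d)))
    [IsProbabilityMeasure π] :
    (∫ p, ‖p.1 - p.2‖ ∂π)
      = (∫⁻ p : EuclideanSpace ℝ (Fin d) × EuclideanSpace ℝ (Fin d),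
          ENNReal.ofReal ‖p.1 - p.2‖ ∂π).toReal := by
  rw [integral_eq_lintegral_of_nonneg_ae (Filter.Eventually.of_forall fun p => norm_nonneg _)
    ((continuous_fst.fun_sub continuous_snd).norm).aestronglyMeasurable]

/-- Nonnegativity of the energy distance:
`2 E‖X−Y‖ − E‖X−X'‖ − E‖Y−Y'‖ ≥ 0` for mutually independent `X, X', Y, Y'`
with `X, X'` i.i.d. and `Y, Y'` i.i.d., having finite first moments. -/
theorem energy_distance_nonneg
    {Ω : Type*} [MeasurableSpace Ω] (μ : Measure Ω) [IsProbabilityMeasure μ]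
    (d : ℕ) (X X' Y Y' : Ω → EuclideanSpace ℝ (Fin d))
    (hindep : iIndepFun ![X, X', Y, Y'] μ)
    (hXX' : IdentDistrib X X' μ μ) (hYY' : IdentDistrib Y Y' μ μ)
    (hXmeas : Measurable X) (hX'meas : Measurable X')
    (hYmeas : Measurable Y) (hY'meas : Measurable Y')
    (hXint : Integrable (fun ω => ‖X ω‖) μ)
    (hYint : Integrable (fun ω => ‖Y ω‖) μ) :
    0 ≤ 2 * (μ[fun ω => ‖X ω - Y ω‖]) - (μ[fun ω => ‖X ω - X' ω‖])
        - (μ[fun ω => ‖Y ω - Y' ω‖]) := by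
  set ν : Measure (EuclideanSpace ℝ (Fin d)) := μ.map X with hνdef
  set ρ : Measure (EuclideanSpace ℝ (Fin d)) := μ.map Y with hρdef
  haveI : IsProbabilityMeasure ν := Measure.isProbabilityMeasure_map hXmeas.aemeasurable
  haveI : IsProbabilityMeasure ρ := Measure.isProbabilityMeasure_map hYmeas.aemeasurable
  -- pairwise independence
  have hXY : IndepFun X Y μ := by
    simpa using hindep.indepFun (show (0 : Fin 4) ≠ 2 by decide)
  have hXX'i : IndepFun X X' μ := by
    simpa using hindep.indepFun (show (0 : Fin 4) ≠ 1 by decide)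
  have hYY'i : IndepFun Y Y' μ := by
    simpa using hindep.indepFun (show (2 : Fin 4) ≠ 3 by decide)
  -- joint laws are products
  have hmXY : μ.map (fun ω => (X ω, Y ω)) = ν.prod ρ :=
    (indepFun_iff_map_prod_eq_prod_map_map hXmeas.aemeasurable hYmeas.aemeasurable).1 hXY
  have hmXX : μ.map (fun ω => (X ω, X' ω)) = ν.prod ν := by
    rw [(indepFun_iff_map_prod_eq_prod_map_map hXmeas.aemeasurable
      hX'meas.aemeasurable).1 hXX'i, ← hXX'.map_eq]
  have hmYY : μ.map (fun ω => (Y ω, Y' ω)) = ρ.prod ρ := by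
    rw [(indepFun_iff_map_prod_eq_prod_map_map hYmeas.aemeasurable
      hY'meas.aemeasurable).1 hYY'i, ← hYY'.map_eq]
  -- convert expectations
  have hconv : ∀ (V W : Ω → EuclideanSpace ℝ (Fin d)), Measurable V → Measurable W →
      ∀ (π : Measure (EuclideanSpace ℝ (Fin d) × EuclideanSpace ℝ (Fin d)))
      [IsProbabilityMeasure π], μ.map (fun ω => (V ω, W ω)) = π →
      (μ[fun ω => ‖V ω - W ω‖])
        = (∫⁻ p : EuclideanSpace ℝ (Fin d) × EuclideanSpace ℝ (Fin d),
            ENNReal.ofReal ‖p.1 - p.2‖ ∂π).toReal := by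
    intro V W hV hW π _ hπ
    have h1 : (μ[fun ω => ‖V ω - W ω‖])
        = ∫ p, ‖p.1 - p.2‖ ∂(μ.map (fun ω => (V ω, W ω))) := by
      rw [integral_map (hV.prodMk hW).aemeasurable
        ((continuous_fst.fun_sub continuous_snd).norm).aestronglyMeasurable]
    rw [h1, hπ, ed_int_eq]
  have hA := hconv X Y hXmeas hYmeas (ν.prod ρ) hmXY
  have hB := hconv X X' hXmeas hX'meas (ν.prod ν) hmXX
  have hC := hconv Y Y' hYmeas hY'meas (ρ.prod ρ) hmYY
  rw [hA, hB, hC]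
  -- integrability of norms under the laws
  have hIν : Integrable (fun x => ‖x‖) ν :=
    (integrable_map_measure continuous_norm.aestronglyMeasurable hXmeas.aemeasurable).2 hXint
  have hIρ : Integrable (fun x => ‖x‖) ρ :=
    (integrable_map_measure continuous_norm.aestronglyMeasurable hYmeas.aemeasurable).2 hYint
  have hfinA := ed_lint_fin ν ρ hIν hIρ
  have hfinB := ed_lint_fin ν ν hIν hIν
  have hfinC := ed_lint_fin ρ ρ hIρ hIρ
  have hcore := ed_core ν ρ
  have h2 : ((∫⁻ p : EuclideanSpace ℝ (Fin d) × EuclideanSpace ℝ (Fin d),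
        ENNReal.ofReal ‖p.1 - p.2‖ ∂(ν.prod ν)).toReal
      + (∫⁻ p : EuclideanSpace ℝ (Fin d) × EuclideanSpace ℝ (Fin d),
        ENNReal.ofReal ‖p.1 - p.2‖ ∂(ρ.prod ρ)).toReal)
      ≤ 2 * (∫⁻ p : EuclideanSpace ℝ (Fin d) × EuclideanSpace ℝ (Fin d),
        ENNReal.ofReal ‖p.1 - p.2‖ ∂(ν.prod ρ)).toReal := by
    rw [← ENNReal.toReal_add hfinB hfinC]
    have h3 : ((2:ℝ≥0∞) * ∫⁻ p : EuclideanSpace ℝ (Fin d) × EuclideanSpace ℝ (Fin d),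
        ENNReal.ofReal ‖p.1 - p.2‖ ∂(ν.prod ρ)).toReal
        = 2 * (∫⁻ p : EuclideanSpace ℝ (Fin d) × EuclideanSpace ℝ (Fin d),
        ENNReal.ofReal ‖p.1 - p.2‖ ∂(ν.prod ρ)).toReal := by
      rw [ENNReal.toReal_mul]; norm_num
    rw [← h3]
    exact ENNReal.toReal_mono (by exact ENNReal.mul_ne_top (by norm_num) hfinA) hcore
  linarith
end

section
/- The weighted V-statistic estimator Γ_n(ρ) = Σ_{1≤k<l≤K} p̂_k p̂_l Γ̂_{kl}(ρ) equals the direct V-statistic estimator G_n(ρ) = (1−ρ)·n^{-2} Σ_{i,j=1}^n ‖X_i − X_j‖ − Σ_{k=1}^K p̂_k n_k^{-2} Σ_{i,j=1}^{n_k} ‖X_i^{(k)} − X_j^{(k)}‖, where Γ̂_{kl}(ρ) = 2(1−ρ)(n_k n_l)^{-1} Σ_{i,j} ‖X_i^{(k)} − X_j^{(l)}‖ − (1 + ρ p̂_k/(1−p̂_k)) n_k^{-2} Σ_{i_1,i_2} ‖X_{i_1}^{(k)} − X_{i_2}^{(k)}‖ − (1 + ρ p̂_l/(1−p̂_l)) n_l^{-2}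 Σ_{j_1,j_2} ‖X_{j_1}^{(l)} − X_{j_2}^{(l)}‖, with p̂_k = n_k/n. -/
open Finset

/-- The pairwise-weighted V-statistic estimator `Γₙ(ρ)` equals the direct
V-statistic estimator `Gₙ(ρ)` of the categorical Gini covariance equation. -/
theorem weighted_v_statistic_eq_direct
    (d K : ℕ) (hK : 2 ≤ K) (m : Fin K → ℕ) (hm : ∀ k, 1 ≤ m k)
    (n : ℕ) (hn : n = ∑ k, m k)
    (X : (k : Fin K) → Fin (m k) → EuclideanSpace ℝ (Fin d))
    (ρ : ℝ) (phat : Fin K → ℝ) (hphat : ∀ k, phat k = (m k : ℝ) / n)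
    (Γhat : Fin K → Fin K → ℝ)
    (hΓhat : ∀ k l, Γhat k l =
      2 * (1 - ρ) * (1 / ((m k : ℝ) * (m l : ℝ))) *
        (∑ i : Fin (m k), ∑ j : Fin (m l), ‖X k i - X l j‖)
      - (1 + ρ * phat k / (1 - phat k)) * (1 / ((m k : ℝ) ^ 2)) *
        (∑ i : Fin (m k), ∑ j : Fin (m k), ‖X k i - X k j‖)
      - (1 + ρ * phat l / (1 - phat l)) * (1 / ((m l : ℝ) ^ 2)) *
        (∑ i : Fin (m l), ∑ j : Fin (m l), ‖X l i - X l j‖))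
    (Γ G : ℝ)
    (hΓ : Γ = ∑ q ∈ univ.filter (fun q : Fin K × Fin K => q.1 < q.2),
      phat q.1 * phat q.2 * Γhat q.1 q.2)
    (hG : G = (1 - ρ) * (1 / ((n : ℝ) ^ 2)) *
        (∑ k, ∑ l, ∑ i : Fin (m k), ∑ j : Fin (m l), ‖X k i - X l j‖)
      - ∑ k, phat k * (1 / ((m k : ℝ) ^ 2)) *
        (∑ i : Fin (m k), ∑ j : Fin (m k), ‖X k i - X k j‖)) :
    Γ = G := by
  set f : Fin K → Fin K → ℝ := fun k l => phat k * phat l * Γhat k l with hfdef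
  -- basic numeric facts
  have hnpos : 0 < n := by
    rw [hn]
    exact Finset.sum_pos (fun k _ => hm k) ⟨⟨0, by omega⟩, mem_univ _⟩
  have hnne : (n : ℝ) ≠ 0 := Nat.cast_ne_zero.mpr hnpos.ne'
  have hmne : ∀ k, (m k : ℝ) ≠ 0 := fun k => Nat.cast_ne_zero.mpr (by have := hm k; omega)
  have hmlt : ∀ k, m k < n := by
    intro k
    have hcard : (univ.erase k).Nonempty := by
      rw [← Finset.card_pos, Finset.card_erase_of_mem (mem_univ k), Finset.card_univ,
        Fintype.card_fin]
      omega
    have hpos : 0 < ∑ l ∈ univ.erase k, m l := Finset.sum_pos (fun l _ => hm l) hcard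
    have := Finset.sum_erase_add univ m (mem_univ k)
    omega
  have hp1 : ∀ k, 1 - phat k ≠ 0 := by
    intro k
    rw [hphat k]
    have h : (m k : ℝ) < (n : ℝ) := by exact_mod_cast hmlt k
    have : (m k : ℝ) / n < 1 := (div_lt_one (by positivity)).mpr h
    linarith
  have hpsum : ∑ k, phat k = 1 := by
    simp only [hphat]
    rw [← Finset.sum_div, ← Nat.cast_sum, ← hn, div_self hnne]
  -- symmetry of the cross sums
  have hAsymm : ∀ k l, (∑ i : Fin (m k), ∑ j : Fin (m l), ‖X k i - X l j‖)
      = ∑ i : Fin (m l), ∑ j : Fin (m k), ‖X l i - X k j‖ := by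
    intro k l
    rw [Finset.sum_comm]
    exact Finset.sum_congr rfl fun j _ => Finset.sum_congr rfl fun i _ => norm_sub_rev _ _
  -- symmetry of f
  have hfsymm : ∀ k l, f k l = f l k := by
    intro k l
    simp only [hfdef, hΓhat]
    rw [hAsymm k l]
    ring
  -- Γ as nested sum
  have hΓ1 : Γ = ∑ k, ∑ l, if k < l then f k l else 0 := by
    rw [hΓ, Finset.sum_filter, Fintype.sum_prod_type]
  have hΓ2 : Γ = ∑ k, ∑ l, if l < k then f k l else 0 := by
    rw [hΓ1, Finset.sum_comm]
    exact Finset.sum_congr rfl fun k _ => Finset.sum_congr rfl fun l _ => by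
      rw [hfsymm k l]
  -- doubled Γ is the full sum minus the diagonal
  have hdouble : Γ + Γ = (∑ k, ∑ l, f k l) - ∑ k, f k k := by
    have h1 : Γ + Γ = ∑ k, ∑ l, ((if k < l then f k l else 0) + (if l < k then f k l else 0)) := by
      nth_rewrite 1 [hΓ1]; nth_rewrite 1 [hΓ2]
      rw [← Finset.sum_add_distrib]
      exact Finset.sum_congr rfl fun k _ => (Finset.sum_add_distrib).symm
    have h2 : ∀ k l : Fin K,
        (if k < l then f k l else 0) + (if l < k then f k l else 0)
          = f k l - (if k = l then f k l else 0) := by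
      intro k l
      rcases lt_trichotomy k l with h | h | h
      · simp [h, not_lt.mpr h.le, h.ne]
      · simp [h]
      · simp [h, not_lt.mpr h.le, h.ne']
    rw [h1]
    have h3 : ∀ k : Fin K, ∑ l, ((if k < l then f k l else 0) + (if l < k then f k l else 0))
        = (∑ l, f k l) - f k k := by
      intro k
      rw [Finset.sum_congr rfl fun l _ => h2 k l, Finset.sum_sub_distrib,
        Finset.sum_ite_eq univ k (f k)]
      simp
    rw [Finset.sum_congr rfl fun k _ => h3 k, Finset.sum_sub_distrib]
  -- row sums of f
  have hrow : ∀ k, ∑ l, f k l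
      = 2 * (1 - ρ) * (1 / ((n : ℝ) ^ 2)) *
          (∑ l, ∑ i : Fin (m k), ∑ j : Fin (m l), ‖X k i - X l j‖)
        - phat k * ((1 + ρ * phat k / (1 - phat k)) * (1 / ((m k : ℝ) ^ 2)) * (∑ i : Fin (m k), ∑ j : Fin (m k), ‖X k i - X k j‖))
        - phat k * (∑ l, phat l * ((1 + ρ * phat l / (1 - phat l)) * (1 / ((m l : ℝ) ^ 2)) * (∑ i : Fin (m l), ∑ j : Fin (m l), ‖X l i - X l j‖))) := by
    intro k
    simp only [hfdef, hΓhat, mul_sub]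
    rw [Finset.sum_sub_distrib, Finset.sum_sub_distrib]
    congr 1
    · congr 1
      · rw [Finset.mul_sum]
        refine Finset.sum_congr rfl fun l _ => ?_
        rw [hphat k, hphat l]
        field_simp
        rw [div_eq_iff (by exact mul_ne_zero (hmne k) (hmne l))]
        ring
      · calc ∑ l, phat k * phat l * ((1 + ρ * phat k / (1 - phat k)) * (1 / ((m k : ℝ) ^ 2)) * (∑ i : Fin (m k), ∑ j : Fin (m k), ‖X k i - X k j‖))
            = ∑ l, phat l * (phat k * ((1 + ρ * phat k / (1 - phat k)) * (1 / ((m k : ℝ) ^ 2)) * (∑ i : Fin (m k), ∑ j : Fin (m k), ‖X k i - X k j‖))) :=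
              Finset.sum_congr rfl fun l _ => by ring
          _ = (∑ l, phat l) * (phat k * ((1 + ρ * phat k / (1 - phat k)) * (1 / ((m k : ℝ) ^ 2)) * (∑ i : Fin (m k), ∑ j : Fin (m k), ‖X k i - X k j‖))) := (Finset.sum_mul _ _ _).symm
          _ = phat k * ((1 + ρ * phat k / (1 - phat k)) * (1 / ((m k : ℝ) ^ 2)) * (∑ i : Fin (m k), ∑ j : Fin (m k), ‖X k i - X k j‖)) := by rw [hpsum, one_mul]
    · calc ∑ l, phat k * phat l * ((1 + ρ * phat l / (1 - phat l)) * (1 / ((m l : ℝ) ^ 2)) * (∑ i : Fin (m l), ∑ j : Fin (m l), ‖X l i - X l j‖))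
          = ∑ l, phat k * (phat l * ((1 + ρ * phat l / (1 - phat l)) * (1 / ((m l : ℝ) ^ 2)) * (∑ i : Fin (m l), ∑ j : Fin (m l), ‖X l i - X l j‖))) :=
            Finset.sum_congr rfl fun l _ => by ring
        _ = phat k * (∑ l, phat l * ((1 + ρ * phat l / (1 - phat l)) * (1 / ((m l : ℝ) ^ 2)) * (∑ i : Fin (m l), ∑ j : Fin (m l), ‖X l i - X l j‖))) := (Finset.mul_sum _ _ _).symm
  have hfullsum : ∑ k, ∑ l, f k l
      = 2 * (1 - ρ) * (1 / ((n : ℝ) ^ 2)) * (∑ k, ∑ l, ∑ i : Fin (m k), ∑ j : Fin (m l), ‖X k i - X l j‖) - (∑ l, phat l * ((1 + ρ * phat l / (1 - phat l)) * (1 / ((m l : ℝ) ^ 2)) * (∑ i : Fin (m l), ∑ j : Fin (m l), ‖X l i - X l j‖))) - (∑ l, phat l * ((1 + ρ * phat l / (1 - phat l)) * (1 / ((m l : ℝ) ^ 2)) * (∑ i : Fin (m l), ∑ j : Fin (m l), ‖X l i - X l j‖))) := by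
    rw [Finset.sum_congr rfl fun k _ => hrow k]
    rw [Finset.sum_sub_distrib, Finset.sum_sub_distrib]
    congr 1
    · congr 1
      exact (Finset.mul_sum _ _ _).symm
    · rw [← Finset.sum_mul, hpsum, one_mul]
  -- per-group key identity
  have hkey : ∀ k, 2 * (phat k * ((1 + ρ * phat k / (1 - phat k)) * (1 / ((m k : ℝ) ^ 2)) * (∑ i : Fin (m k), ∑ j : Fin (m k), ‖X k i - X k j‖))) + f k k
      = 2 * (phat k * (1 / ((m k : ℝ) ^ 2)) * (∑ i : Fin (m k), ∑ j : Fin (m k), ‖X k i - X k j‖)) := by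
    intro k
    have hD : (1 + ρ * phat k / (1 - phat k)) * (1 - phat k) = 1 - phat k + ρ * phat k := by
      rw [add_mul, one_mul, div_mul_cancel₀ _ (hp1 k)]
    simp only [hfdef, hΓhat]
    linear_combination (2 * phat k * (1 / ((m k : ℝ) ^ 2)) *
      (∑ i : Fin (m k), ∑ j : Fin (m k), ‖X k i - X k j‖)) * hD
  have hsumkey : 2 * (∑ l, phat l * ((1 + ρ * phat l / (1 - phat l)) * (1 / ((m l : ℝ) ^ 2)) * (∑ i : Fin (m l), ∑ j : Fin (m l), ‖X l i - X l j‖))) + ∑ k, f k k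
      = 2 * ∑ k, phat k * (1 / ((m k : ℝ) ^ 2)) * (∑ i : Fin (m k), ∑ j : Fin (m k), ‖X k i - X k j‖) := by
    rw [Finset.mul_sum, Finset.mul_sum, ← Finset.sum_add_distrib]
    exact Finset.sum_congr rfl fun k _ => hkey k
  have hGG : Γ + Γ = G + G := by
    rw [hdouble, hfullsum, hG]
    linarith [hsumkey]
  linarith [hGG]
end
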